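/- Let n ≥ 2, N = 2n, h = 1/n, d ≥ 1, c ∈ ℝ, and let (B_h^D, B_h^P) be an LFA-compatible pair of matrices. Consider the stationary iterations u^{k+1} = u^k + B_h^D (f − A_h^D u^k) and ũ^{k+1} = ũ^k + B_h^P (f̃ − A_h^P ũ^k). If f̃ = E_{o,h}^{⊗d} f and ũ^0 = E_{o,h}^{⊗d} u^0, then ũ^k = E_{o,h}^{⊗d} u^k for all k = 1, 2, …. -/
import Mathlib


open Matrix Finset

noncomputable section

/-- The tridiagonal matrix `tridiag(-1, 2, -1)` of size `m × m` (0-based indexing). -/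
def tridiag (m : ℕ) : Matrix (Fin m) (Fin m) ℝ :=
  Matrix.of fun i j =>
    if (i : ℕ) = (j : ℕ) then 2
    else if (i : ℕ) + 1 = (j : ℕ) ∨ (j : ℕ) + 1 = (i : ℕ) then -1 else 0

/-- The odd extension operator `E_{o,h} : ℝ^{n-1} → ℝ^{2n}`, sending the basis vector
`e_i^{n-1}` (math index `i = 1,…,n-1`) to `e_i^{2n} - e_{2n-i}^{2n}`.
In 0-based indexing, column `i` has entry `1` in row `i` and `-1` in row `2n - i - 2`. -/
def oddExt (n : ℕ) : Matrix (Fin (2 * n)) (Fin (n - 1)) ℝ :=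
  Matrix.of fun k i =>
    if (k : ℕ) = (i : ℕ) then 1
    else if (k : ℕ) + (i : ℕ) + 2 = 2 * n then -1 else 0

/-- The restriction operator `R_{o,h} = (1/2) E_{o,h}ᵀ`. -/
def oddRestr (n : ℕ) : Matrix (Fin (n - 1)) (Fin (2 * n)) ℝ :=
  (2 : ℝ)⁻¹ • (oddExt n)ᵀ

/-- The Dirichlet matrix `T_h^D = (1/h²) · tridiag(-1, 2, -1)`, with `h = 1/n`
(so `1/h² = n²`). -/
def ThD (n : ℕ) : Matrix (Fin (n - 1)) (Fin (n - 1)) ℝ :=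
  ((n : ℝ) ^ 2) • tridiag (n - 1)

/-- The periodic matrix `T_h^P = (1/h²) · (tridiag(-1,2,-1) - e₁ e_Nᵀ - e_N e₁ᵀ)`,
with `h = 1/n`, `N = 2n` (0-based: corners at `(0, 2n-1)` and `(2n-1, 0)`). -/
def ThP (n : ℕ) : Matrix (Fin (2 * n)) (Fin (2 * n)) ℝ :=
  ((n : ℝ) ^ 2) •
    (tridiag (2 * n)
      - Matrix.of (fun (i j : Fin (2 * n)) => if (i : ℕ) = 0 ∧ (j : ℕ) = 2 * n - 1 then 1 else 0)
      - Matrix.of (fun (i j : Fin (2 * n)) => if (i : ℕ) = 2 * n - 1 ∧ (j : ℕ) = 0 then 1 else 0))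

/-- The `d`-fold Kronecker power `X^{⊗d}`, where `ℝ^{a^d}` is identified with the
space of functions `(Fin d → Fin a) → ℝ`. -/
def kronPow {a b : ℕ} (d : ℕ) (X : Matrix (Fin a) (Fin b) ℝ) :
    Matrix (Fin d → Fin a) (Fin d → Fin b) ℝ :=
  Matrix.of fun i j => ∏ t, X (i t) (j t)

/-- `Σ_{t=1}^d I^{⊗(t-1)} ⊗ T ⊗ I^{⊗(d-t)}` in the function-indexed representation. -/
def kronSumId {m : ℕ} (d : ℕ) (T : Matrix (Fin m) (Fin m) ℝ) :
    Matrix (Fin d → Fin m) (Fin d → Fin m) ℝ :=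
  ∑ t : Fin d, Matrix.of fun i j =>
    T (i t) (j t) * ∏ s ∈ Finset.univ.erase t, (if i s = j s then (1 : ℝ) else 0)

/-- The `d`-dimensional discrete Dirichlet reaction-diffusion matrix
`A_h^D = Σ_j I^{⊗(j-1)} ⊗ T_h^D ⊗ I^{⊗(d-j)} + c I^{⊗d}`. -/
def AD (n d : ℕ) (c : ℝ) : Matrix (Fin d → Fin (n - 1)) (Fin d → Fin (n - 1)) ℝ :=
  kronSumId d (ThD n) + c • 1

/-- The `d`-dimensional discrete periodic reaction-diffusion matrix
`A_h^P = Σ_j I^{⊗(j-1)} ⊗ T_h^P ⊗ I^{⊗(d-j)} + c I^{⊗d}`. -/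
def AP (n d : ℕ) (c : ℝ) : Matrix (Fin d → Fin (2 * n)) (Fin d → Fin (2 * n)) ℝ :=
  kronSumId d (ThP n) + c • 1

/-- A pair `(M^D, M^P)` is LFA-compatible with respect to an extension `E` and a
restriction `R` if `M^D = R M^P E` and `M^P` maps `range E` into itself. -/
def LFACompatible {α β : Type*} [Fintype α] [Fintype β]
    (E : Matrix α β ℝ) (R : Matrix β α ℝ)
    (MD : Matrix β β ℝ) (MP : Matrix α α ℝ) : Prop :=
  MD = R * MP * E ∧ ∀ v ∈ Set.range E.mulVec, MP *ᵥ v ∈ Set.range E.mulVec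


section Aux

lemma sum_ite_castEq {m : ℕ} (c : ℕ) (f : Fin m → ℝ) :
    (∑ j : Fin m, if (j : ℕ) = c then f j else 0) =
      if h : c < m then f ⟨c, h⟩ else 0 := by
  split_ifs with h
  · rw [Finset.sum_eq_single (⟨c, h⟩ : Fin m)]
    · simp
    · intro j _ hj
      rw [if_neg]
      simpa [Fin.ext_iff] using hj
    · simp
  · apply Finset.sum_eq_zero
    intro j _
    rw [if_neg]
    have := j.isLt
    omega

set_option maxHeartbeats 4000000 in
lemma TE_comm (n : ℕ) (hn : 2 ≤ n) : ThP n * oddExt n = oddExt n * ThD n := by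
  ext k i
  have hk : (k : ℕ) < 2 * n := k.isLt
  have hi : (i : ℕ) < n - 1 := i.isLt
  simp only [ThP, ThD, Matrix.mul_apply, Matrix.smul_apply, Matrix.sub_apply,
    Matrix.of_apply, tridiag, oddExt, smul_eq_mul]
  have hL : ∀ l : Fin (2 * n),
      (if (l : ℕ) = (i : ℕ) then (1:ℝ) else if (l : ℕ) + (i : ℕ) + 2 = 2 * n then -1 else 0)
      = (if (l : ℕ) = (i : ℕ) then (1:ℝ) else 0)
        - (if (l : ℕ) = 2 * n - (i : ℕ) - 2 then 1 else 0) := by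
    intro l
    have := l.isLt
    split_ifs <;> first | (exfalso; omega) | norm_num
  have hR : ∀ j : Fin (n - 1),
      (if (k : ℕ) = (j : ℕ) then (1:ℝ) else if (k : ℕ) + (j : ℕ) + 2 = 2 * n then -1 else 0)
      = (if (j : ℕ) = (k : ℕ) then (1:ℝ) else 0)
        - (if (j : ℕ) = (if n ≤ (k : ℕ) ∧ (k : ℕ) + 2 ≤ 2 * n then 2 * n - (k : ℕ) - 2 else 2 * n)
            then 1 else 0) := by
    intro j
    have := j.isLt
    split_ifs <;> first | (exfalso; omega) | norm_num
  conv_lhs =>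
    enter [2, l]
    rw [hL l]
    rw [mul_sub, mul_ite, mul_one, mul_zero, mul_ite, mul_one, mul_zero]
  conv_rhs =>
    enter [2, j]
    rw [hR j]
    rw [sub_mul, ite_mul, one_mul, zero_mul, ite_mul, one_mul, zero_mul]
  rw [Finset.sum_sub_distrib, Finset.sum_sub_distrib, sum_ite_castEq, sum_ite_castEq,
    sum_ite_castEq, sum_ite_castEq]
  rw [dif_pos (show (i : ℕ) < 2 * n by omega),
    dif_pos (show 2 * n - (i : ℕ) - 2 < 2 * n by omega)]
  simp only [eq_false (show ¬((i:ℕ) = 2 * n - 1) by omega),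
    eq_false (show ¬(2 * n - (i:ℕ) - 2 = 2 * n - 1) by omega),
    eq_false (show ¬(2 * n - (i:ℕ) - 2 = 0) by omega),
    and_false, if_false]
  split_ifs <;> first | (exfalso; omega) | ring

lemma sum_update_left {a d : ℕ} (t : Fin d) (i : Fin d → Fin a) (F : (Fin d → Fin a) → ℝ) :
    ∑ k : Fin d → Fin a, (∏ s ∈ Finset.univ.erase t, if i s = k s then (1:ℝ) else 0) * F k
      = ∑ x : Fin a, F (Function.update i t x) := by
  classical
  have h1 : ∀ k : Fin d → Fin a,
      k ∉ Finset.image (fun x => Function.update i t x) Finset.univ →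
      (∏ s ∈ Finset.univ.erase t, if i s = k s then (1:ℝ) else 0) * F k = 0 := by
    intro k hk
    have hex : ∃ s, s ≠ t ∧ k s ≠ i s := by
      by_contra h
      push_neg at h
      refine hk (Finset.mem_image.2 ⟨k t, Finset.mem_univ _, ?_⟩)
      funext s
      by_cases hs : s = t
      · subst hs; simp
      · simp [Function.update_of_ne hs, h s hs]
    obtain ⟨s, hst, hks⟩ := hex
    have hz : (if i s = k s then (1:ℝ) else 0) = 0 := by
      rw [if_neg]
      exact fun h => hks h.symm
    rw [Finset.prod_eq_zero (Finset.mem_erase.2 ⟨hst, Finset.mem_univ _⟩) hz, zero_mul]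
  calc ∑ k : Fin d → Fin a, (∏ s ∈ Finset.univ.erase t, if i s = k s then (1:ℝ) else 0) * F k
      = ∑ k ∈ Finset.image (fun x => Function.update i t x) Finset.univ,
          (∏ s ∈ Finset.univ.erase t, if i s = k s then (1:ℝ) else 0) * F k :=
        (Finset.sum_subset (Finset.subset_univ _) (fun k _ hk => h1 k hk)).symm
    _ = ∑ x : Fin a,
          (∏ s ∈ Finset.univ.erase t, if i s = Function.update i t x s then (1:ℝ) else 0)
            * F (Function.update i t x) := by
        refine Finset.sum_image ?_
        intro x _ y _ h
        have := congrFun h t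
        simpa using this
    _ = ∑ x : Fin a, F (Function.update i t x) := by
        refine Finset.sum_congr rfl fun x _ => ?_
        rw [Finset.prod_eq_one, one_mul]
        intro s hs
        rw [Function.update_of_ne (Finset.mem_erase.1 hs).1, if_pos rfl]

lemma sum_update_right {a d : ℕ} (t : Fin d) (j : Fin d → Fin a) (F : (Fin d → Fin a) → ℝ) :
    ∑ k : Fin d → Fin a, F k * (∏ s ∈ Finset.univ.erase t, if k s = j s then (1:ℝ) else 0)
      = ∑ x : Fin a, F (Function.update j t x) := by
  rw [← sum_update_left t j F]
  refine Finset.sum_congr rfl fun k _ => ?_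
  rw [mul_comm]
  congr 1
  refine Finset.prod_congr rfl fun s _ => ?_
  simp [eq_comm]

lemma kronSum_comm {a b : ℕ} (d : ℕ) (T : Matrix (Fin a) (Fin a) ℝ)
    (T' : Matrix (Fin b) (Fin b) ℝ) (E : Matrix (Fin a) (Fin b) ℝ) (h : T * E = E * T') :
    kronSumId d T * kronPow d E = kronPow d E * kronSumId d T' := by
  classical
  ext i j
  simp only [Matrix.mul_apply, kronSumId, kronPow, Matrix.sum_apply, Matrix.of_apply,
    Finset.sum_mul, Finset.mul_sum]
  rw [Finset.sum_comm]
  conv_rhs => rw [Finset.sum_comm]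
  refine Finset.sum_congr rfl fun t _ => ?_
  have e1 : ∀ k : Fin d → Fin a,
      (T (i t) (k t) * ∏ s ∈ Finset.univ.erase t, if i s = k s then (1:ℝ) else 0)
        * ∏ s, E (k s) (j s)
      = (∏ s ∈ Finset.univ.erase t, if i s = k s then (1:ℝ) else 0)
        * (T (i t) (k t) * ∏ s, E (k s) (j s)) := fun k => by ring
  have e2 : ∀ k : Fin d → Fin b,
      (∏ s, E (i s) (k s))
        * (T' (k t) (j t) * ∏ s ∈ Finset.univ.erase t, if k s = j s then (1:ℝ) else 0)
      = ((∏ s, E (i s) (k s)) * T' (k t) (j t))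
        * ∏ s ∈ Finset.univ.erase t, if k s = j s then (1:ℝ) else 0 := fun k => by ring
  rw [Finset.sum_congr rfl fun k _ => e1 k, Finset.sum_congr rfl fun k _ => e2 k,
    sum_update_left t i (fun k => T (i t) (k t) * ∏ s, E (k s) (j s)),
    sum_update_right t j (fun k => (∏ s, E (i s) (k s)) * T' (k t) (j t))]
  have hP1 : ∀ x : Fin a, (∏ s, E (Function.update i t x s) (j s))
      = E x (j t) * ∏ s ∈ Finset.univ.erase t, E (i s) (j s) := by
    intro x
    rw [← Finset.mul_prod_erase Finset.univ (fun s => E (Function.update i t x s) (j s))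
      (Finset.mem_univ t), Function.update_self]
    congr 1
    refine Finset.prod_congr rfl fun s hs => ?_
    rw [Function.update_of_ne (Finset.mem_erase.1 hs).1]
  have hP2 : ∀ x : Fin b, (∏ s, E (i s) (Function.update j t x s))
      = E (i t) x * ∏ s ∈ Finset.univ.erase t, E (i s) (j s) := by
    intro x
    rw [← Finset.mul_prod_erase Finset.univ (fun s => E (i s) (Function.update j t x s))
      (Finset.mem_univ t), Function.update_self]
    congr 1
    refine Finset.prod_congr rfl fun s hs => ?_
    rw [Function.update_of_ne (Finset.mem_erase.1 hs).1]
  simp only [Function.update_self, hP1, hP2]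
  have e3 : ∑ x : Fin a, T (i t) x * (E x (j t) * ∏ s ∈ Finset.univ.erase t, E (i s) (j s))
      = (T * E) (i t) (j t) * ∏ s ∈ Finset.univ.erase t, E (i s) (j s) := by
    rw [Matrix.mul_apply, Finset.sum_mul]
    exact Finset.sum_congr rfl fun x _ => by ring
  have e4 : ∑ x : Fin b,
      (E (i t) x * ∏ s ∈ Finset.univ.erase t, E (i s) (j s)) * T' x (j t)
      = (E * T') (i t) (j t) * ∏ s ∈ Finset.univ.erase t, E (i s) (j s) := by
    rw [Matrix.mul_apply, Finset.sum_mul]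
    exact Finset.sum_congr rfl fun x _ => by ring
  rw [e3, e4, h]

lemma kronPow_mul {a b c' : ℕ} (d : ℕ) (X : Matrix (Fin a) (Fin b) ℝ)
    (Y : Matrix (Fin b) (Fin c') ℝ) :
    kronPow d X * kronPow d Y = kronPow d (X * Y) := by
  ext i j
  simp only [Matrix.mul_apply, kronPow, Matrix.of_apply, ← Finset.prod_mul_distrib]
  rw [Fintype.prod_sum (f := fun s x => X (i s) x * Y x (j s))]

lemma kronPow_one {a : ℕ} (d : ℕ) : kronPow d (1 : Matrix (Fin a) (Fin a) ℝ) = 1 := by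
  ext i j
  simp only [kronPow, Matrix.of_apply, Matrix.one_apply]
  rw [Finset.prod_boole]
  simp [funext_iff]

lemma RE_one (n : ℕ) (hn : 2 ≤ n) : oddRestr n * oddExt n = 1 := by
  ext i j
  have hi : (i : ℕ) < n - 1 := i.isLt
  have hj : (j : ℕ) < n - 1 := j.isLt
  simp only [oddRestr, oddExt, Matrix.mul_apply, Matrix.smul_apply, Matrix.transpose_apply,
    Matrix.of_apply, Matrix.one_apply, smul_eq_mul]
  have hs : ∀ k : Fin (2 * n),
      2⁻¹ * (if (k : ℕ) = (i : ℕ) then (1:ℝ) else if (k : ℕ) + (i : ℕ) + 2 = 2 * n then -1 else 0)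
        * (if (k : ℕ) = (j : ℕ) then (1:ℝ) else if (k : ℕ) + (j : ℕ) + 2 = 2 * n then -1 else 0)
      = (if (k : ℕ) = (i : ℕ) then
            2⁻¹ * ((if (k : ℕ) = (j : ℕ) then (1:ℝ) else 0)
              - (if (k : ℕ) = 2 * n - (j : ℕ) - 2 then 1 else 0)) else 0)
        - (if (k : ℕ) = 2 * n - (i : ℕ) - 2 then
            2⁻¹ * ((if (k : ℕ) = (j : ℕ) then (1:ℝ) else 0)
              - (if (k : ℕ) = 2 * n - (j : ℕ) - 2 then 1 else 0)) else 0) := by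
    intro k
    have := k.isLt
    split_ifs <;> first | (exfalso; omega) | norm_num
  rw [Finset.sum_congr rfl (fun k _ => hs k), Finset.sum_sub_distrib, sum_ite_castEq,
    sum_ite_castEq, dif_pos (show (i : ℕ) < 2 * n by omega),
    dif_pos (show 2 * n - (i : ℕ) - 2 < 2 * n by omega)]
  simp only [Fin.ext_iff]
  split_ifs <;> first | (exfalso; omega) | norm_num

lemma AP_E (n d : ℕ) (hn : 2 ≤ n) (c : ℝ) :
    AP n d c * kronPow d (oddExt n) = kronPow d (oddExt n) * AD n d c := by
  unfold AP AD
  rw [Matrix.add_mul, Matrix.mul_add, kronSum_comm d (ThP n) (ThD n) (oddExt n) (TE_comm n hn)]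
  congr 1
  rw [Matrix.smul_mul, Matrix.one_mul, Matrix.mul_smul, Matrix.mul_one]


end Aux

/-- if `(B_h^D, B_h^P)` is LFA-compatible, `f̃ = E_{o,h}^{⊗d} f` and
`ũ⁰ = E_{o,h}^{⊗d} u⁰`, then the stationary iterations satisfy
`ũᵏ = E_{o,h}^{⊗d} uᵏ` for all `k = 1, 2, …`. -/
theorem iterates_related (n d : ℕ) (hn : 2 ≤ n) (hd : 1 ≤ d) (c : ℝ)
    (BD : Matrix (Fin d → Fin (n - 1)) (Fin d → Fin (n - 1)) ℝ)
    (BP : Matrix (Fin d → Fin (2 * n)) (Fin d → Fin (2 * n)) ℝ)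
    (hB : LFACompatible (kronPow d (oddExt n)) (kronPow d (oddRestr n)) BD BP)
    (f : (Fin d → Fin (n - 1)) → ℝ) (ft : (Fin d → Fin (2 * n)) → ℝ)
    (u : ℕ → (Fin d → Fin (n - 1)) → ℝ) (ut : ℕ → (Fin d → Fin (2 * n)) → ℝ)
    (hu : ∀ k, u (k + 1) = u k + BD *ᵥ (f - AD n d c *ᵥ u k))
    (hut : ∀ k, ut (k + 1) = ut k + BP *ᵥ (ft - AP n d c *ᵥ ut k))
    (hf : ft = kronPow d (oddExt n) *ᵥ f)
    (h0 : ut 0 = kronPow d (oddExt n) *ᵥ u 0) :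
    ∀ k, 1 ≤ k → ut k = kronPow d (oddExt n) *ᵥ u k := by
  obtain ⟨hBD, hrange⟩ := hB
  have hRE : kronPow d (oddRestr n) * kronPow d (oddExt n) = 1 := by
    rw [kronPow_mul, RE_one n hn, kronPow_one]
  have hBP : ∀ w, BP *ᵥ (kronPow d (oddExt n) *ᵥ w)
      = kronPow d (oddExt n) *ᵥ (BD *ᵥ w) := by
    intro w
    obtain ⟨z, hz⟩ := hrange (kronPow d (oddExt n) *ᵥ w) ⟨w, rfl⟩
    have hzz : BD *ᵥ w = z := by
      rw [hBD]
      calc (kronPow d (oddRestr n) * BP * kronPow d (oddExt n)) *ᵥ w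
          = kronPow d (oddRestr n) *ᵥ (BP *ᵥ (kronPow d (oddExt n) *ᵥ w)) := by
            rw [← Matrix.mulVec_mulVec, ← Matrix.mulVec_mulVec]
        _ = kronPow d (oddRestr n) *ᵥ (kronPow d (oddExt n) *ᵥ z) := by rw [hz]
        _ = z := by rw [Matrix.mulVec_mulVec, hRE, Matrix.one_mulVec]
    rw [hzz, hz]
  have hA : ∀ w, AP n d c *ᵥ (kronPow d (oddExt n) *ᵥ w)
      = kronPow d (oddExt n) *ᵥ (AD n d c *ᵥ w) := by
    intro w
    rw [Matrix.mulVec_mulVec, Matrix.mulVec_mulVec, AP_E n d hn c]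
  have main : ∀ k, ut k = kronPow d (oddExt n) *ᵥ u k := by
    intro k
    induction k with
    | zero => exact h0
    | succ k ih =>
      rw [hut, hu, ih, hf, Matrix.mulVec_add]
      congr 1
      rw [hA, ← Matrix.mulVec_sub, hBP]
  exact fun k _ => main k
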